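/- Let Z_1, …, Z_n be independent random variables with mean zero and E[|Z_i|^α] < ∞ for some 1 < α ≤ 2. Then E[|∑_{i=1}^n Z_i|^α] ≤ 2 · ∑_{i=1}^n E[|Z_i|^α]. Consequently, P(|(1/n)∑_{i=1}^n Z_i| > ε) ≤ 2 ∑_i E[|Z_i|^α] / (ε n)^α. -/

import Mathlib

open MeasureTheory ProbabilityTheory Filter

private lemma rpow_subadd {x y p : ℝ} (hx : 0 ≤ x) (hy : 0 ≤ y) (hp : 0 ≤ p) (hp1 : p ≤ 1) :
    (x + y) ^ p ≤ x ^ p + y ^ p := by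
  have h := NNReal.rpow_add_le_add_rpow x.toNNReal y.toNNReal hp hp1
  have hxy : 0 ≤ x + y := add_nonneg hx hy
  rw [← Real.toNNReal_add hx hy] at h
  have := NNReal.coe_le_coe.mpr h
  simpa [NNReal.coe_rpow, Real.coe_toNNReal _ hx, Real.coe_toNNReal _ hy,
    Real.coe_toNNReal _ hxy] using this

private lemma keyA {α : ℝ} (hα1 : 1 ≤ α) (hα2 : α ≤ 2) {t : ℝ} (ht : 0 ≤ t) :
    (1 + t) ^ α ≤ 1 + α * t + t ^ α := by
  set F : ℝ → ℝ := fun t => 1 + α * t + t ^ α - (1 + t) ^ α with hF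
  have hderiv : ∀ x : ℝ, HasDerivAt F (α + α * x ^ (α-1) - 1 * α * (1+x) ^ (α-1)) x := by
    intro x
    have h1 := (((hasDerivAt_id x).const_mul α).const_add 1).add
      (Real.hasDerivAt_rpow_const (Or.inr hα1) (x := x))
    have h2 := HasDerivAt.rpow_const ((hasDerivAt_id x).const_add 1) (Or.inr hα1) (p := α)
    have := h1.sub h2
    refine this.congr_deriv ?_
    simp [id]
  have hmono : MonotoneOn F (Set.Ici (0:ℝ)) := by
    apply monotoneOn_of_deriv_nonneg (convex_Ici 0)
    · exact fun x _ => ((hderiv x).differentiableAt.continuousAt).continuousWithinAt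
    · exact fun x _ => ((hderiv x).differentiableAt).differentiableWithinAt
    · intro x hx
      rw [interior_Ici] at hx
      rw [(hderiv x).deriv]
      have hsub : (1 + x) ^ (α-1) ≤ 1 ^ (α-1) + x ^ (α-1) :=
        rpow_subadd zero_le_one hx.le (by linarith) (by linarith)
      rw [Real.one_rpow] at hsub
      have hα0 : (0:ℝ) < α := by linarith
      nlinarith
  have h0 : F 0 = 0 := by simp [hF, Real.zero_rpow (by positivity : α ≠ 0)]
  have := hmono (Set.self_mem_Ici) (Set.mem_Ici.mpr ht) ht
  rw [h0] at this
  simpa [hF] using this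

private lemma keyB {α : ℝ} (hα1 : 1 ≤ α) (hα2 : α ≤ 2) {s : ℝ} (hs0 : 0 ≤ s) (hs1 : s ≤ 1) :
    (1 - s) ^ α ≤ 1 - α * s + 2 * s ^ α := by
  set G : ℝ → ℝ := fun s => 1 - α * s + 2 * s ^ α - (1 - s) ^ α with hG
  have hderiv : ∀ x : ℝ,
      HasDerivAt G (-α + 2 * (α * x ^ (α-1)) - (-1) * α * (1-x) ^ (α-1)) x := by
    intro x
    have h1 := ((hasDerivAt_id x).const_mul α).const_sub 1 |>.add
      ((Real.hasDerivAt_rpow_const (Or.inr hα1) (x := x)).const_mul 2)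
    have h2 := HasDerivAt.rpow_const ((hasDerivAt_id x).const_sub 1) (Or.inr hα1) (p := α)
    have := h1.sub h2
    refine this.congr_deriv ?_
    simp [id]
  have hmono : MonotoneOn G (Set.Icc (0:ℝ) 1) := by
    apply monotoneOn_of_deriv_nonneg (convex_Icc 0 1)
    · exact fun x _ => ((hderiv x).differentiableAt.continuousAt).continuousWithinAt
    · exact fun x _ => ((hderiv x).differentiableAt).differentiableWithinAt
    · intro x hx
      rw [interior_Icc] at hx
      rw [(hderiv x).deriv]
      have hx0 : 0 < x := hx.1
      have hx1 : x < 1 := hx.2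
      have e1 : x ^ (1:ℝ) ≤ x ^ (α-1) :=
        Real.rpow_le_rpow_of_exponent_ge hx0 hx1.le (by linarith)
      have e2 : (1-x) ^ (1:ℝ) ≤ (1-x) ^ (α-1) :=
        Real.rpow_le_rpow_of_exponent_ge (by linarith) (by linarith) (by linarith)
      rw [Real.rpow_one] at e1 e2
      have hα0 : (0:ℝ) < α := by linarith
      nlinarith
  have h0 : G 0 = 0 := by simp [hG, Real.zero_rpow (by positivity : α ≠ 0)]
  have := hmono (Set.left_mem_Icc.mpr zero_le_one) (Set.mem_Icc.mpr ⟨hs0, hs1⟩) hs0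
  rw [h0] at this
  simpa [hG] using this

private lemma keyC {α : ℝ} (hα1 : 1 ≤ α) (hα2 : α ≤ 2) {s : ℝ} (hs : 1 ≤ s) :
    α * s ≤ 1 + s ^ α := by
  set H : ℝ → ℝ := fun s => 1 + s ^ α - α * s with hH
  have hderiv : ∀ x : ℝ, HasDerivAt H (α * x ^ (α-1) - α) x := by
    intro x
    have h1 := (Real.hasDerivAt_rpow_const (Or.inr hα1) (x := x)).const_add 1
    have h2 := (hasDerivAt_id x).const_mul α
    have := h1.sub h2
    refine this.congr_deriv ?_
    simp [id]
  have hmono : MonotoneOn H (Set.Ici (1:ℝ)) := by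
    apply monotoneOn_of_deriv_nonneg (convex_Ici 1)
    · exact fun x _ => ((hderiv x).differentiableAt.continuousAt).continuousWithinAt
    · exact fun x _ => ((hderiv x).differentiableAt).differentiableWithinAt
    · intro x hx
      rw [interior_Ici] at hx
      rw [(hderiv x).deriv]
      have : (1:ℝ) ≤ x ^ (α-1) := Real.one_le_rpow hx.le (by linarith)
      have hα0 : (0:ℝ) < α := by linarith
      nlinarith
  have h1 : H 1 = 2 - α := by simp [hH]; norm_num
  have := hmono (Set.self_mem_Ici) (Set.mem_Ici.mpr hs) hs
  rw [h1] at this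
  simp only [hH] at this
  linarith

private lemma keyD {α : ℝ} (hα1 : 1 ≤ α) (hα2 : α ≤ 2) (t : ℝ) :
    |1 + t| ^ α ≤ 1 + α * t + 2 * |t| ^ α := by
  rcases le_or_gt 0 t with ht | ht
  · rw [abs_of_nonneg (by linarith), abs_of_nonneg ht]
    have : (0:ℝ) ≤ t ^ α := Real.rpow_nonneg ht α
    nlinarith [keyA hα1 hα2 ht]
  rcases le_or_gt (-1) t with ht1 | ht1
  · rw [abs_of_nonneg (by linarith), abs_of_neg ht]
    have := keyB hα1 hα2 (by linarith : (0:ℝ) ≤ -t) (by linarith)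
    calc (1 + t) ^ α = (1 - (-t)) ^ α := by ring_nf
      _ ≤ 1 - α * (-t) + 2 * (-t) ^ α := this
      _ = 1 + α * t + 2 * (-t) ^ α := by ring
  · rw [abs_of_neg (by linarith), abs_of_neg ht]
    have h1 : (0:ℝ) ≤ -(1+t) := by linarith
    have h2 : -(1+t) ≤ -t := by linarith
    have h3 : (-(1+t)) ^ α ≤ (-t) ^ α := Real.rpow_le_rpow h1 h2 (by linarith)
    have h4 : α * (-t) ≤ 1 + (-t) ^ α := keyC hα1 hα2 (by linarith)
    linarith

private lemma keyE {α : ℝ} (hα1 : 1 ≤ α) (hα2 : α ≤ 2) (x y : ℝ) :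
    |x + y| ^ α ≤ |x| ^ α + α * (Real.sign x * |x| ^ (α - 1)) * y + 2 * |y| ^ α := by
  rcases eq_or_ne x 0 with rfl | hx
  · simp only [zero_add, abs_zero, Real.sign_zero, zero_mul, mul_zero]
    rw [Real.zero_rpow (by positivity : α ≠ 0)]
    nlinarith [Real.rpow_nonneg (abs_nonneg y) α]
  · have hax : 0 < |x| := abs_pos.mpr hx
    have hxy : x + y = x * (1 + y / x) := by field_simp
    have h1 : |x + y| ^ α = |x| ^ α * |1 + y / x| ^ α := by
      rw [hxy, abs_mul, Real.mul_rpow (abs_nonneg x) (abs_nonneg _)]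
    have h2 : |x| ^ α * |y / x| ^ α = |y| ^ α := by
      rw [← Real.mul_rpow (abs_nonneg x) (abs_nonneg _), ← abs_mul]
      congr 2
      field_simp
    have h3 : |x| ^ α * (y / x) = Real.sign x * |x| ^ (α - 1) * y := by
      rcases lt_or_gt_of_ne hx with hneg | hpos
      · rw [Real.sign_of_neg hneg, abs_of_neg hneg,
          show α = (α - 1) + 1 by ring, Real.rpow_add (by linarith), Real.rpow_one]
        rw [show α - 1 + 1 - 1 = α - 1 by ring]
        field_simp
      · rw [Real.sign_of_pos hpos, abs_of_pos hpos,
          show α = (α - 1) + 1 by ring, Real.rpow_add hpos, Real.rpow_one]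
        rw [show α - 1 + 1 - 1 = α - 1 by ring]
        field_simp
    calc |x + y| ^ α = |x| ^ α * |1 + y / x| ^ α := h1
      _ ≤ |x| ^ α * (1 + α * (y / x) + 2 * |y / x| ^ α) :=
          mul_le_mul_of_nonneg_left (keyD hα1 hα2 _) (Real.rpow_nonneg (abs_nonneg x) α)
      _ = |x| ^ α + α * (|x| ^ α * (y / x)) + 2 * (|x| ^ α * |y / x| ^ α) := by ring
      _ = |x| ^ α + α * (Real.sign x * |x| ^ (α - 1)) * y + 2 * |y| ^ α := by
          rw [h2, h3]; ring

private lemma keyF {α : ℝ} (hα0 : 0 ≤ α) (x y : ℝ) :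
    |x + y| ^ α ≤ 2 ^ α * (|x| ^ α + |y| ^ α) := by
  have h1 : |x + y| ≤ 2 * max |x| |y| := by
    have := abs_add_le x y
    have := le_max_left |x| |y|
    have := le_max_right |x| |y|
    linarith
  calc |x + y| ^ α ≤ (2 * max |x| |y|) ^ α :=
        Real.rpow_le_rpow (abs_nonneg _) h1 hα0
    _ = 2 ^ α * (max |x| |y|) ^ α :=
        Real.mul_rpow (by norm_num) (le_max_of_le_left (abs_nonneg x))
    _ ≤ 2 ^ α * (|x| ^ α + |y| ^ α) := by
        apply mul_le_mul_of_nonneg_left _ (Real.rpow_nonneg (by norm_num) α)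
        rcases max_cases |x| |y| with ⟨h, _⟩ | ⟨h, _⟩ <;> rw [h]
        · linarith [Real.rpow_nonneg (abs_nonneg y) α]
        · linarith [Real.rpow_nonneg (abs_nonneg x) α]

private lemma measurable_real_sign : Measurable Real.sign := by
  have : Real.sign = fun x : ℝ => if x < 0 then (-1:ℝ) else if 0 < x then 1 else 0 := by
    funext x; rw [Real.sign]
  rw [this]
  exact Measurable.ite (measurableSet_lt measurable_id measurable_const) measurable_const
    (Measurable.ite (measurableSet_lt measurable_const measurable_id) measurable_const
      measurable_const)

private lemma vbe_main {Ω : Type*} [MeasureSpace Ω] [IsProbabilityMeasure (ℙ : Measure Ω)]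
    {α : ℝ} (hα1 : 1 < α) (hα2 : α ≤ 2)
    (Z : ℕ → Ω → ℝ)
    (hindep : iIndepFun Z ℙ)
    (hmeas : ∀ i, Measurable (Z i))
    (hmean : ∀ i, ∫ ω, Z i ω = 0)
    (hint : ∀ i, Integrable (fun ω => |Z i ω| ^ α) (ℙ : Measure Ω)) (k : ℕ) :
    Integrable (fun ω => |∑ i ∈ Finset.range k, Z i ω| ^ α) (ℙ : Measure Ω) ∧
    (∫ ω, |∑ i ∈ Finset.range k, Z i ω| ^ α)
      ≤ 2 * ∑ i ∈ Finset.range k, ∫ ω, |Z i ω| ^ α := by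
  have hα1' : 1 ≤ α := hα1.le
  have hα0 : (0:ℝ) < α := by linarith
  have hmeasS : ∀ m, Measurable (fun ω => ∑ i ∈ Finset.range m, Z i ω) :=
    fun m => Finset.measurable_sum _ (fun i _ => hmeas i)
  have hmeasSa : ∀ m, Measurable (fun ω => |∑ i ∈ Finset.range m, Z i ω| ^ α) :=
    fun m => ((hmeasS m).abs).pow measurable_const
  have hZint : ∀ i, Integrable (Z i) (ℙ : Measure Ω) := by
    intro i
    refine ((integrable_const 1).add (hint i)).mono' (hmeas i).aestronglyMeasurable ?_
    filter_upwards with ω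
    rw [Real.norm_eq_abs]
    rcases le_or_gt (|Z i ω|) 1 with h | h
    · have := Real.rpow_nonneg (abs_nonneg (Z i ω)) α
      simp only [Pi.add_apply]
      linarith
    · have h2 : |Z i ω| ^ (1:ℝ) ≤ |Z i ω| ^ α :=
        Real.rpow_le_rpow_of_exponent_le h.le hα1'
      rw [Real.rpow_one] at h2
      simp only [Pi.add_apply]
      linarith
  have hsignmeas : Measurable (fun x : ℝ => Real.sign x * |x| ^ (α-1)) :=
    measurable_real_sign.mul ((measurable_id.abs).pow measurable_const)
  induction k with
  | zero =>
    constructor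
    · have : (fun ω : Ω => |∑ i ∈ Finset.range 0, Z i ω| ^ α) = fun _ => 0 := by
        funext ω; simp [Real.zero_rpow hα0.ne']
      rw [this]; exact integrable_const 0
    · simp [Real.zero_rpow hα0.ne']
  | succ k ih =>
    obtain ⟨ihInt, ihBound⟩ := ih
    have hgint : Integrable
        (fun ω => Real.sign (∑ i ∈ Finset.range k, Z i ω)
          * |∑ i ∈ Finset.range k, Z i ω| ^ (α-1)) (ℙ : Measure Ω) := by
      refine ((integrable_const 1).add ihInt).mono'
        ((hsignmeas.comp (hmeasS k)).aestronglyMeasurable) ?_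
      filter_upwards with ω
      set s := ∑ i ∈ Finset.range k, Z i ω with hs
      have hsb : |Real.sign s| ≤ 1 := by
        rcases lt_trichotomy s 0 with h | h | h
        · rw [Real.sign_of_neg h]; norm_num
        · rw [h, Real.sign_zero]; norm_num
        · rw [Real.sign_of_pos h]; norm_num
      have hpw : |s| ^ (α-1) ≤ 1 + |s| ^ α := by
        rcases le_or_gt (|s|) 1 with h | h
        · have := Real.rpow_le_one (abs_nonneg s) h (by linarith : (0:ℝ) ≤ α - 1)
          have := Real.rpow_nonneg (abs_nonneg s) α
          linarith
        · have := Real.rpow_le_rpow_of_exponent_le h.le (by linarith : α - 1 ≤ α)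
          linarith
      rw [Real.norm_eq_abs, abs_mul, abs_of_nonneg (Real.rpow_nonneg (abs_nonneg s) (α-1))]
      have h0 : (0:ℝ) ≤ |s| ^ (α-1) := Real.rpow_nonneg (abs_nonneg s) (α-1)
      simp only [Pi.add_apply]
      nlinarith
    have hindepSZ : IndepFun (fun ω => ∑ i ∈ Finset.range k, Z i ω) (Z k) ℙ := by
      have h := hindep.indepFun_sum_range_succ hmeas k
      have he : (∑ j ∈ Finset.range k, Z j) = fun ω => ∑ i ∈ Finset.range k, Z i ω := by
        funext ω; simp [Finset.sum_apply]
      rwa [he] at h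
    have hindepG : IndepFun
        (fun ω => Real.sign (∑ i ∈ Finset.range k, Z i ω)
          * |∑ i ∈ Finset.range k, Z i ω| ^ (α-1)) (Z k) ℙ :=
      hindepSZ.comp hsignmeas measurable_id
    have hprodint : Integrable
        (fun ω => (Real.sign (∑ i ∈ Finset.range k, Z i ω)
          * |∑ i ∈ Finset.range k, Z i ω| ^ (α-1)) * Z k ω) (ℙ : Measure Ω) :=
      hindepG.integrable_mul hgint (hZint k)
    have hcross : (∫ ω, (Real.sign (∑ i ∈ Finset.range k, Z i ω)
        * |∑ i ∈ Finset.range k, Z i ω| ^ (α-1)) * Z k ω) = 0 := by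
      have h := hindepG.integral_mul_eq_mul_integral hgint.aestronglyMeasurable (hZint k).aestronglyMeasurable
      have h2 : integral ℙ (Z k) = 0 := hmean k
      rw [h2, mul_zero] at h
      exact h
    have hSucc : ∀ ω : Ω, ∑ i ∈ Finset.range (k+1), Z i ω
        = (∑ i ∈ Finset.range k, Z i ω) + Z k ω := by
      intro ω; rw [Finset.sum_range_succ]
    have hptwise : ∀ ω : Ω, |∑ i ∈ Finset.range (k+1), Z i ω| ^ α
        ≤ |∑ i ∈ Finset.range k, Z i ω| ^ α
          + α * ((Real.sign (∑ i ∈ Finset.range k, Z i ω)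
              * |∑ i ∈ Finset.range k, Z i ω| ^ (α-1)) * Z k ω)
          + 2 * |Z k ω| ^ α := by
      intro ω
      rw [hSucc ω]
      simpa [mul_assoc] using keyE hα1' hα2 (∑ i ∈ Finset.range k, Z i ω) (Z k ω)
    have hSuccInt : Integrable
        (fun ω => |∑ i ∈ Finset.range (k+1), Z i ω| ^ α) (ℙ : Measure Ω) := by
      refine ((ihInt.add (hint k)).const_mul (2 ^ α)).mono'
        (hmeasSa (k+1)).aestronglyMeasurable ?_
      filter_upwards with ω
      rw [Real.norm_eq_abs, abs_of_nonneg (Real.rpow_nonneg (abs_nonneg _) α), hSucc ω]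
      exact keyF hα0.le _ _
    refine ⟨hSuccInt, ?_⟩
    have hRHSint : Integrable (fun ω => |∑ i ∈ Finset.range k, Z i ω| ^ α
        + α * ((Real.sign (∑ i ∈ Finset.range k, Z i ω)
            * |∑ i ∈ Finset.range k, Z i ω| ^ (α-1)) * Z k ω)
        + 2 * |Z k ω| ^ α) (ℙ : Measure Ω) :=
      (ihInt.add (hprodint.const_mul α)).add ((hint k).const_mul 2)
    have hABint : Integrable (fun ω => |∑ i ∈ Finset.range k, Z i ω| ^ α
        + α * ((Real.sign (∑ i ∈ Finset.range k, Z i ω)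
            * |∑ i ∈ Finset.range k, Z i ω| ^ (α-1)) * Z k ω)) (ℙ : Measure Ω) :=
      ihInt.add (hprodint.const_mul α)
    have hCint : Integrable (fun ω => 2 * |Z k ω| ^ α) (ℙ : Measure Ω) :=
      (hint k).const_mul 2
    have hle := integral_mono hSuccInt hRHSint hptwise
    rw [integral_add hABint hCint,
        integral_add ihInt (hprodint.const_mul α),
        integral_const_mul, integral_const_mul, hcross, mul_zero, add_zero] at hle
    calc (∫ ω, |∑ i ∈ Finset.range (k+1), Z i ω| ^ α)
        ≤ (∫ ω, |∑ i ∈ Finset.range k, Z i ω| ^ α) + 2 * ∫ ω, |Z k ω| ^ α := hle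
      _ ≤ 2 * (∑ i ∈ Finset.range k, ∫ ω, |Z i ω| ^ α) + 2 * ∫ ω, |Z k ω| ^ α := by
          linarith
      _ = 2 * ∑ i ∈ Finset.range (k+1), ∫ ω, |Z i ω| ^ α := by
          rw [Finset.sum_range_succ]; ring

/-- von Bahr–Esseen inequality. For independent mean-zero random
variables `Z_1,…,Z_n` with `E[|Z_i|^α] < ∞`, `1 < α ≤ 2`:
`E[|∑ Z_i|^α] ≤ 2 ∑ E[|Z_i|^α]`, and consequently
`P(|(1/n)∑ Z_i| > ε) ≤ 2 ∑ E[|Z_i|^α] / (εn)^α`. -/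
theorem stmt7 {Ω : Type*} [MeasureSpace Ω] [IsProbabilityMeasure (ℙ : Measure Ω)]
    (α : ℝ) (hα1 : 1 < α) (hα2 : α ≤ 2) (n : ℕ) (hn : 0 < n)
    (Z : ℕ → Ω → ℝ)
    (hindep : iIndepFun Z ℙ)
    (hmeas : ∀ i, Measurable (Z i))
    (hmean : ∀ i, ∫ ω, Z i ω = 0)
    (hint : ∀ i, Integrable (fun ω => |Z i ω| ^ α) (ℙ : Measure Ω)) :
    (∫ ω, |∑ i ∈ Finset.range n, Z i ω| ^ α)
        ≤ 2 * ∑ i ∈ Finset.range n, ∫ ω, |Z i ω| ^ α ∧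
    ∀ ε : ℝ, 0 < ε →
      (ℙ {ω : Ω | ε < |(∑ i ∈ Finset.range n, Z i ω) / (n : ℝ)|}).toReal
        ≤ 2 * (∑ i ∈ Finset.range n, ∫ ω, |Z i ω| ^ α) / (ε * (n : ℝ)) ^ α := by
  obtain ⟨hInt, hBound⟩ := vbe_main hα1 hα2 Z hindep hmeas hmean hint n
  refine ⟨hBound, ?_⟩
  intro ε hε
  have hα0 : (0:ℝ) < α := by linarith
  have hnpos : (0:ℝ) < n := Nat.cast_pos.mpr hn
  have hεn : 0 < ε * n := mul_pos hε hnpos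
  have hc : 0 < (ε * (n:ℝ)) ^ α := Real.rpow_pos_of_pos hεn α
  have hsub : {ω : Ω | ε < |(∑ i ∈ Finset.range n, Z i ω) / (n : ℝ)|}
      ⊆ {ω : Ω | (ε * (n:ℝ)) ^ α ≤ |∑ i ∈ Finset.range n, Z i ω| ^ α} := by
    intro ω hω
    simp only [Set.mem_setOf_eq] at hω ⊢
    rw [abs_div, abs_of_pos hnpos] at hω
    have h1 : ε * n < |∑ i ∈ Finset.range n, Z i ω| := (lt_div_iff₀ hnpos).mp hω
    exact Real.rpow_le_rpow hεn.le h1.le hα0.le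
  have hmono : (ℙ {ω : Ω | ε < |(∑ i ∈ Finset.range n, Z i ω) / (n : ℝ)|}).toReal
      ≤ (ℙ {ω : Ω | (ε * (n:ℝ)) ^ α ≤ |∑ i ∈ Finset.range n, Z i ω| ^ α}).toReal :=
    (ENNReal.toReal_le_toReal (measure_ne_top _ _) (measure_ne_top _ _)).mpr
      (measure_mono hsub)
  have hmarkov := mul_meas_ge_le_integral_of_nonneg
    (μ := (ℙ : Measure Ω)) (f := fun ω => |∑ i ∈ Finset.range n, Z i ω| ^ α)
    (ae_of_all _ fun ω => Real.rpow_nonneg (abs_nonneg _) α) hInt ((ε * (n:ℝ)) ^ α)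
  have h2 : (ℙ {ω : Ω | (ε * (n:ℝ)) ^ α ≤ |∑ i ∈ Finset.range n, Z i ω| ^ α}).toReal
      ≤ (∫ ω, |∑ i ∈ Finset.range n, Z i ω| ^ α) / (ε * (n:ℝ)) ^ α := by
    rw [le_div_iff₀ hc]
    rw [measureReal_def] at hmarkov
    linarith [hmarkov]
  calc (ℙ {ω : Ω | ε < |(∑ i ∈ Finset.range n, Z i ω) / (n : ℝ)|}).toReal
      ≤ (ℙ {ω : Ω | (ε * (n:ℝ)) ^ α ≤ |∑ i ∈ Finset.range n, Z i ω| ^ α}).toReal := hmono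
    _ ≤ (∫ ω, |∑ i ∈ Finset.range n, Z i ω| ^ α) / (ε * (n:ℝ)) ^ α := h2
    _ ≤ 2 * (∑ i ∈ Finset.range n, ∫ ω, |Z i ω| ^ α) / (ε * (n:ℝ)) ^ α := by
        gcongr
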